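/- Let G be a finite set of guides over a finite alphabet Σ with adjustment equivalence ∼. Then the set Z of all repetition-free slices for symbols of Σ and G is finite. Moreover, for every string u and every guided rewrite sequence ρ for u, there exists a slice sequence σ for u consisting of slices from Z only such that yield(σ) = yield(ρ). -/

import Mathlib

/-- A guided rewrite sequence for `u`: a list of guide-position pairs `(g, p)`
with `g ∈ G`, `p + |g| ≤ |u|` and `u[p+1, p+|g|] ∼ g`. -/
def IsRewriteSeq {α : Type} (sim : α → α → Prop) (G : Set (List α)) (u : List α)
    (ρ : List (List α × ℕ)) : Prop :=
  ∀ gp ∈ ρ, gp.1 ∈ G ∧ gp.2 + gp.1.length ≤ u.length ∧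
    List.Forall₂ sim ((u.drop gp.2).take gp.1.length) gp.1

/-- Apply a single guided rewrite `(g, p)` to `u`, replacing `u[p+1, p+|g|]` by `g`. -/
def applyRW {α : Type} (u : List α) (gp : List α × ℕ) : List α :=
  u.take gp.2 ++ gp.1 ++ u.drop (gp.2 + gp.1.length)

/-- The yield of a guided rewrite sequence: the final string `u_r`. -/
def rwYield {α : Type} (u : List α) (ρ : List (List α × ℕ)) : List α :=
  ρ.foldl applyRW u

/-- A slice for a symbol `a`: a finite sequence of guide-offset pairs `(g, q)`
with `g ∈ G`, `1 ≤ q ≤ |g|` and `a ∼ g[q]` (offsets are 1-based). -/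
def IsSlice {α : Type} (sim : α → α → Prop) (G : Set (List α))
    (sl : List (List α × ℕ)) (a : α) : Prop :=
  ∀ gq ∈ sl, gq.1 ∈ G ∧ 1 ≤ gq.2 ∧ gq.2 ≤ gq.1.length ∧
    ∃ b, gq.1[gq.2 - 1]? = some b ∧ sim a b

/-- The yield of a slice for the symbol `a`: the symbol `g[q]` of its last
guide-offset pair, or `a` itself if the slice is empty. -/
def sliceYield {α : Type} (a : α) (sl : List (List α × ℕ)) : α :=
  match sl.getLast? with
  | some gq => (gq.1[gq.2 - 1]?).getD a
  | none => a

/-- A start slice: all offsets equal `1`. -/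
def IsStartSlice {α : Type} (sl : List (List α × ℕ)) : Prop :=
  ∀ gq ∈ sl, gq.2 = 1

/-- An end slice: each offset equals the length of its guide. -/
def IsEndSlice {α : Type} (sl : List (List α × ℕ)) : Prop :=
  ∀ gq ∈ sl, gq.2 = gq.1.length

/-- `γ` is the cut for slices `sl` and `sl'`: a monotone partial injection from
the index set of `sl` to that of `sl'` with `γ(i) = j` iff `g_i = g'_j` and
`q_i + 1 = q'_j`; indexes outside the domain carry the last offset of their
guide, indexes outside the range carry offset `1`. -/
def IsCut {α : Type} (sl sl' : List (List α × ℕ)) (γ : ℕ → Option ℕ) : Prop :=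
  (∀ i j, γ i = some j → i < sl.length ∧ j < sl'.length) ∧
  (∀ i i' j j', γ i = some j → γ i' = some j' → i < i' → j < j') ∧
  (∀ (i : ℕ) (hi : i < sl.length) (j : ℕ) (hj : j < sl'.length),
      γ i = some j ↔
        (sl.get ⟨i, hi⟩).1 = (sl'.get ⟨j, hj⟩).1 ∧
        (sl.get ⟨i, hi⟩).2 + 1 = (sl'.get ⟨j, hj⟩).2) ∧
  (∀ (i : ℕ) (hi : i < sl.length), γ i = none →
      (sl.get ⟨i, hi⟩).2 = (sl.get ⟨i, hi⟩).1.length) ∧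
  (∀ (j : ℕ) (hj : j < sl'.length), (∀ i, γ i ≠ some j) →
      (sl'.get ⟨j, hj⟩).2 = 1)

/-- A slice sequence for `u`: one slice per position of `u`, the first being a
start slice, the last an end slice, and any two neighbouring slices being
related by a cut. -/
def IsSliceSeq {α : Type} (sim : α → α → Prop) (G : Set (List α)) (u : List α)
    (σ : List (List (List α × ℕ))) : Prop :=
  σ.length = u.length ∧
  (∀ (n : ℕ) (sl : List (List α × ℕ)) (a : α),
      σ[n]? = some sl → u[n]? = some a → IsSlice sim G sl a) ∧
  (∀ (n : ℕ) (sl sl' : List (List α × ℕ)),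
      σ[n]? = some sl → σ[n + 1]? = some sl' → ∃ γ, IsCut sl sl' γ) ∧
  (∀ sl, σ[0]? = some sl → IsStartSlice sl) ∧
  (∀ sl, σ[σ.length - 1]? = some sl → IsEndSlice sl)

/-- The yield of a slice sequence for `u`: the concatenation of the yields of
its slices (position `n` uses `u[n]` as default symbol). -/
def seqYield {α : Type} (u : List α) (σ : List (List (List α × ℕ))) : List α :=
  (u.zip σ).map (fun p => sliceYield p.1 p.2)

/-- A slice is repetition-free if no guide-offset pair occurs twice in it. -/
def RepetitionFree {α : Type} (sl : List (List α × ℕ)) : Prop := sl.Nodup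


lemma nodup_lists_finite {β : Type*} {S : Set β} (hS : S.Finite) :
    {l : List β | l.Nodup ∧ ∀ x ∈ l, x ∈ S}.Finite := by
  classical
  have h : {l : List β | l.Nodup ∧ ∀ x ∈ l, x ∈ S} ⊆
      ⋃ t ∈ (hS.toFinset.powerset : Finset (Finset β)), {l | l ∈ t.toList.permutations} := by
    rintro l ⟨hnd, hmem⟩
    refine Set.mem_biUnion (x := l.toFinset) ?_ ?_
    · refine Finset.mem_powerset.2 ?_
      intro x hx
      simp only [List.mem_toFinset] at hx
      exact hS.mem_toFinset.2 (hmem x hx)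
    · simp only [Set.mem_setOf_eq, List.mem_permutations]
      exact (List.toFinset_toList hnd).symm
  refine Set.Finite.subset (Set.Finite.biUnion (hS.toFinset.powerset.finite_toSet) ?_) h
  intro t _
  exact (t.toList.permutations).finite_toSet

lemma slice_pairs_finite {α : Type} {sim : α → α → Prop} {G : Set (List α)} (hG : G.Finite) :
    {gq : List α × ℕ | gq.1 ∈ G ∧ 1 ≤ gq.2 ∧ gq.2 ≤ gq.1.length}.Finite := by
  have h : {gq : List α × ℕ | gq.1 ∈ G ∧ 1 ≤ gq.2 ∧ gq.2 ≤ gq.1.length} ⊆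
      ⋃ g ∈ G, (fun q => (g, q)) '' (Set.Icc 1 g.length) := by
    rintro ⟨g, q⟩ ⟨hg, h1, h2⟩
    exact Set.mem_biUnion hg ⟨q, ⟨h1, h2⟩, rfl⟩
  exact Set.Finite.subset (Set.Finite.biUnion hG fun g _ =>
    (Set.finite_Icc 1 g.length).image _) h

section Aux
variable {α : Type} {sim : α → α → Prop} {G : Set (List α)}

lemma applyRW_length {u g : List α} {p : ℕ} (h : p + g.length ≤ u.length) :
    (applyRW u (g, p)).length = u.length := by
  simp only [applyRW, List.length_append, List.length_take, List.length_drop]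
  omega

lemma applyRW_getElem?_left {u g : List α} {p n : ℕ} (h : p + g.length ≤ u.length)
    (hn : n < p) : (applyRW u (g, p))[n]? = u[n]? := by
  unfold applyRW
  rw [List.getElem?_append_left, List.getElem?_append_left, List.getElem?_take]
  · simp [hn]
  · simp only [List.length_take]; omega
  · simp only [List.length_append, List.length_take]; omega

lemma applyRW_getElem?_mid {u g : List α} {p n : ℕ} (h : p + g.length ≤ u.length)
    (h1 : p ≤ n) (h2 : n < p + g.length) : (applyRW u (g, p))[n]? = g[n - p]? := by
  unfold applyRW
  have ht : (u.take p).length = p := by simp only [List.length_take]; omega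
  rw [List.getElem?_append_left, List.getElem?_append_right, ht]
  · rw [ht]; omega
  · simp only [List.length_append, ht]; omega

lemma applyRW_getElem?_right {u g : List α} {p n : ℕ} (h : p + g.length ≤ u.length)
    (h2 : p + g.length ≤ n) : (applyRW u (g, p))[n]? = u[n]? := by
  unfold applyRW
  have ht : (u.take p).length = p := by simp only [List.length_take]; omega
  rw [List.getElem?_append_right, List.getElem?_drop]
  · congr 1
    simp only [List.length_append, ht]
    omega
  · simp only [List.length_append, ht]; omega

/-- index form of the rewrite-step condition -/
lemma seg_sim {u g : List α} {p : ℕ} (h : p + g.length ≤ u.length)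
    (hf : List.Forall₂ sim ((u.drop p).take g.length) g) :
    ∀ k (a b : α), u[p + k]? = some a → g[k]? = some b → sim a b := by
  rw [List.forall₂_iff_get] at hf
  intro k a b ha hb
  have hk : k < g.length := (List.getElem?_eq_some_iff.1 hb).1
  have hpk : p + k < u.length := (List.getElem?_eq_some_iff.1 ha).1
  have h1 : k < ((u.drop p).take g.length).length := by
    simp only [List.length_take, List.length_drop]; omega
  have := hf.2 k h1 hk
  simp only [List.get_eq_getElem, List.getElem_take, List.getElem_drop] at this
  have ha' : u[p + k] = a := by
    have := List.getElem?_eq_some_iff.1 ha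
    exact this.2
  have hb' : g[k] = b := (List.getElem?_eq_some_iff.1 hb).2
  rwa [ha', hb'] at this


/-- if the slice is nonempty and is a slice for some symbol, its yield does
not depend on the default symbol. -/
lemma sliceYield_eq_of_isSlice {sl : List (List α × ℕ)} {b : α} (hsl : IsSlice sim G sl b)
    (hne : sl ≠ []) (a : α) : sliceYield a sl = sliceYield b sl := by
  have hlast : sl.getLast? = some (sl.getLast hne) := List.getLast?_eq_getLast hne
  set gq := sl.getLast hne with hgq
  have hmem : gq ∈ sl := List.getLast_mem hne
  obtain ⟨_, _, _, c, hc, _⟩ := hsl gq hmem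
  simp [sliceYield, hlast, hc]

lemma getLast?_cons_of_ne_nil {β : Type*} (x : β) {l : List β} (h : l ≠ []) :
    (x :: l).getLast? = l.getLast? := by
  cases l with
  | nil => exact absurd rfl h
  | cons y t => rfl

lemma sliceYield_cons_of_ne_nil {β : Type*} [Inhabited β] : True := trivial

lemma sliceYield_cons_ne_nil (a : α) (x : List α × ℕ) {t : List (List α × ℕ)} (h : t ≠ []) :
    sliceYield a (x :: t) = sliceYield a t := by
  simp only [sliceYield, getLast?_cons_of_ne_nil x h]

lemma sliceYield_singleton (a : α) (x : List α × ℕ) :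
    sliceYield a [x] = (x.1[x.2 - 1]?).getD a := rfl

lemma chain_down {v : List α} {σ : List (List (List α × ℕ))} (h : IsSliceSeq sim G v σ)
    {g : List α} {p : ℕ} :
    ∀ k, ∀ sl, σ[p + k]? = some sl → (g, k + 1) ∈ sl →
      ∀ sl0, σ[p]? = some sl0 → (g, 1) ∈ sl0 := by
  intro k
  induction k with
  | zero =>
    intro sl h1 hm sl0 h0
    rw [Nat.add_zero] at h1; rw [h0] at h1
    exact (Option.some_inj.1 h1) ▸ hm
  | succ k ih =>
    intro sl h1 hm sl0 h0
    have hlt : p + k + 1 < σ.length := by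
      have := (List.getElem?_eq_some_iff.1 h1).1
      omega
    have hkσ : p + k < σ.length := by omega
    obtain ⟨slk, hslk⟩ : ∃ slk, σ[p + k]? = some slk :=
      ⟨σ[p + k], (List.getElem?_eq_some_iff.2 ⟨hkσ, rfl⟩)⟩
    obtain ⟨γ, hγ⟩ := h.2.2.1 (p + k) slk sl hslk (by rw [Nat.add_assoc]; exact h1)
    obtain ⟨j, hj, hjv⟩ := List.mem_iff_getElem.1 hm
    obtain ⟨i, hi⟩ : ∃ i, γ i = some j := by
      by_contra hc
      push_neg at hc
      have := hγ.2.2.2.2 j hj hc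
      simp only [List.get_eq_getElem, hjv] at this
      omega
    have hib := (hγ.1 i j hi).1
    have := (hγ.2.2.1 i hib j hj).1 hi
    simp only [List.get_eq_getElem, hjv] at this
    have hmem : (g, k + 1) ∈ slk := by
      have : slk[i] = (g, k + 1) := by
        obtain ⟨e1, e2⟩ := this
        exact Prod.ext e1 (by omega)
      exact this ▸ List.getElem_mem hib
    exact ih slk hslk hmem sl0 h0

lemma chain_up {v : List α} {σ : List (List (List α × ℕ))} (h : IsSliceSeq sim G v σ)
    {g : List α} {p : ℕ} (hp : p + g.length ≤ v.length)
    (h0 : ∀ sl0, σ[p]? = some sl0 → (g, 1) ∈ sl0) :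
    ∀ k, k < g.length → ∀ sl, σ[p + k]? = some sl → (g, k + 1) ∈ sl := by
  intro k
  induction k with
  | zero => intro _ sl h1; rw [Nat.add_zero] at h1; exact h0 sl h1
  | succ k ih =>
    intro hk sl h1
    have hσlen : σ.length = v.length := h.1
    have hkσ : p + k < σ.length := by omega
    obtain ⟨slk, hslk⟩ : ∃ slk, σ[p + k]? = some slk :=
      ⟨σ[p + k], (List.getElem?_eq_some_iff.2 ⟨hkσ, rfl⟩)⟩
    have hmemk : (g, k + 1) ∈ slk := ih (by omega) slk hslk
    obtain ⟨γ, hγ⟩ := h.2.2.1 (p + k) slk sl hslk (by rw [Nat.add_assoc]; exact h1)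
    obtain ⟨i, hi, hiv⟩ := List.mem_iff_getElem.1 hmemk
    cases hγi : γ i with
    | none =>
      have := hγ.2.2.2.1 i hi hγi
      simp only [List.get_eq_getElem, hiv] at this
      omega
    | some j =>
      have hjb := (hγ.1 i j hγi).2
      have := (hγ.2.2.1 i hi j hjb).1 hγi
      simp only [List.get_eq_getElem, hiv] at this
      have : sl[j] = (g, k + 1 + 1) := by
        obtain ⟨e1, e2⟩ := this
        exact Prod.ext e1.symm (by omega)
      exact this ▸ List.getElem_mem hjb

lemma sl_of_replicate {n m : ℕ} {sl : List (List α × ℕ)}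
    (h : (List.replicate n ([] : List (List α × ℕ)))[m]? = some sl) : sl = [] := by
  have hm := (List.getElem?_eq_some_iff.1 h).1
  have := (List.getElem?_eq_some_iff.1 h).2
  rw [List.getElem_replicate] at this
  exact this.symm

lemma base_sliceSeq (u : List α) :
    IsSliceSeq sim G u (List.replicate u.length []) ∧
    seqYield u (List.replicate u.length []) = u := by
  constructor
  · refine ⟨List.length_replicate, ?_, ?_, ?_, ?_⟩
    · intro n sl a hsl _
      rw [sl_of_replicate hsl]
      intro gq hgq; cases hgq
    · intro n sl sl' hsl hsl'
      rw [sl_of_replicate hsl, sl_of_replicate hsl']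
      refine ⟨fun _ => none, ?_, ?_, ?_, ?_, ?_⟩
      · intro i j h; cases h
      · intro i i' j j' h; cases h
      · intro i hi; simp at hi
      · intro i hi; simp at hi
      · intro j hj; simp at hj
    · intro sl hsl; rw [sl_of_replicate hsl]; intro gq hgq; cases hgq
    · intro sl hsl; rw [sl_of_replicate hsl]; intro gq hgq; cases hgq
  · apply List.ext_getElem
    · simp [seqYield]
    · intro n h1 h2
      simp [seqYield, List.getElem_zip, sliceYield]

/-- extend a cut when only the right slice gains a new first pair `(g, 1)`. -/
lemma cut_shift_right {sl sl' : List (List α × ℕ)} {γ : ℕ → Option ℕ} (h : IsCut sl sl' γ)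
    (g : List α) (hq : ∀ gq ∈ sl, 1 ≤ gq.2) :
    IsCut sl ((g, 1) :: sl') (fun i => (γ i).map (· + 1)) := by
  obtain ⟨h1, h2, h3, h4, h5⟩ := h
  refine ⟨?_, ?_, ?_, ?_, ?_⟩
  · intro i j hij
    simp only [Option.map_eq_some_iff] at hij
    obtain ⟨j', hj', rfl⟩ := hij
    have := h1 i j' hj'
    simp only [List.length_cons]
    omega
  · intro i i' j j' hij hij' hii'
    simp only [Option.map_eq_some_iff] at hij hij'
    obtain ⟨a, ha, rfl⟩ := hij
    obtain ⟨b, hb, rfl⟩ := hij'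
    have := h2 i i' a b ha hb hii'
    omega
  · intro i hi j hj
    cases j with
    | zero =>
      simp only [List.get_eq_getElem, List.getElem_cons_zero]
      constructor
      · intro hc; simp only [Option.map_eq_some_iff] at hc; obtain ⟨a, _, ha⟩ := hc; omega
      · rintro ⟨-, hc⟩
        have := hq (sl.get ⟨i, hi⟩) (List.get_mem _ _)
        simp only [List.get_eq_getElem] at this hc
        omega
    | succ j' =>
      have hj' : j' < sl'.length := by simpa using hj
      have := h3 i hi j' hj'
      simp only [List.get_eq_getElem] at this ⊢
      simp only [List.getElem_cons_succ]
      rw [← this]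
      constructor
      · intro hc; simp only [Option.map_eq_some_iff] at hc
        obtain ⟨a, ha, hae⟩ := hc
        have : a = j' := by omega
        exact this ▸ ha
      · intro hc; rw [hc]; rfl
  · intro i hi hnone
    simp only [Option.map_eq_none_iff] at hnone
    exact h4 i hi hnone
  · intro j hj hnr
    cases j with
    | zero => simp
    | succ j' =>
      have hj' : j' < sl'.length := by simpa using hj
      have : ∀ i, γ i ≠ some j' := by
        intro i hc
        exact hnr i (by simp [hc])
      have := h5 j' hj' this
      simp only [List.get_eq_getElem] at this ⊢
      simpa using this

/-- extend a cut when only the left slice gains a new first pair `(g, |g|)`. -/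
lemma cut_shift_left {sl sl' : List (List α × ℕ)} {γ : ℕ → Option ℕ} (h : IsCut sl sl' γ)
    (g : List α) (hq : ∀ gq ∈ sl', gq.2 ≤ gq.1.length) :
    IsCut ((g, g.length) :: sl) sl' (fun i => match i with | 0 => none | i + 1 => γ i) := by
  obtain ⟨h1, h2, h3, h4, h5⟩ := h
  refine ⟨?_, ?_, ?_, ?_, ?_⟩
  · intro i j hij
    cases i with
    | zero => cases hij
    | succ i' =>
      have := h1 i' j hij
      simp only [List.length_cons]; omega
  · intro i i' j j' hij hij' hii'
    cases i with
    | zero => cases hij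
    | succ a =>
      cases i' with
      | zero => omega
      | succ b => exact h2 a b j j' hij hij' (by omega)
  · intro i hi j hj
    cases i with
    | zero =>
      simp only [List.get_eq_getElem, List.getElem_cons_zero]
      constructor
      · intro hc; cases hc
      · rintro ⟨hg, hc⟩
        have := hq (sl'.get ⟨j, hj⟩) (List.get_mem _ _)
        simp only [List.get_eq_getElem] at this
        rw [← hg] at this
        omega
    | succ i' =>
      have hi' : i' < sl.length := by simpa using hi
      have := h3 i' hi' j hj
      simp only [List.get_eq_getElem, List.getElem_cons_succ] at this ⊢
      exact this
  · intro i hi hnone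
    cases i with
    | zero => simp
    | succ i' =>
      have hi' : i' < sl.length := by simpa using hi
      have := h4 i' hi' hnone
      simp only [List.get_eq_getElem, List.getElem_cons_succ] at this ⊢
      exact this
  · intro j hj hnr
    refine h5 j hj ?_
    intro i hc
    exact hnr (i + 1) hc

/-- extend a cut when both slices gain a new first pair, `(g, q)` and `(g, q+1)`. -/
lemma cut_both {sl sl' : List (List α × ℕ)} {γ : ℕ → Option ℕ} (h : IsCut sl sl' γ)
    (g : List α) (q : ℕ) (hnm : (g, q) ∉ sl) (hnm' : (g, q + 1) ∉ sl') :
    IsCut ((g, q) :: sl) ((g, q + 1) :: sl')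
      (fun i => match i with | 0 => some 0 | i + 1 => (γ i).map (· + 1)) := by
  obtain ⟨h1, h2, h3, h4, h5⟩ := h
  refine ⟨?_, ?_, ?_, ?_, ?_⟩
  · intro i j hij
    cases i with
    | zero =>
      cases hij
      simp only [List.length_cons]; omega
    | succ i' =>
      simp only [Option.map_eq_some_iff] at hij
      obtain ⟨a, ha, rfl⟩ := hij
      have := h1 i' a ha
      simp only [List.length_cons]; omega
  · intro i i' j j' hij hij' hii'
    cases i with
    | zero =>
      cases hij
      cases i' with
      | zero => omega
      | succ b =>
        simp only [Option.map_eq_some_iff] at hij'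
        obtain ⟨c, hc, rfl⟩ := hij'
        omega
    | succ a =>
      cases i' with
      | zero => omega
      | succ b =>
        simp only [Option.map_eq_some_iff] at hij hij'
        obtain ⟨c, hc, rfl⟩ := hij
        obtain ⟨d, hd, rfl⟩ := hij'
        have := h2 a b c d hc hd (by omega)
        omega
  · intro i hi j hj
    cases i with
    | zero =>
      cases j with
      | zero => simp
      | succ j' =>
        have hj' : j' < sl'.length := by simpa using hj
        simp only [List.get_eq_getElem, List.getElem_cons_zero, List.getElem_cons_succ]
        constructor
        · intro hc; cases hc
        · rintro ⟨hg, hc⟩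
          exfalso
          apply hnm'
          have : sl'[j'] = (g, q + 1) := Prod.ext hg.symm hc.symm
          exact this ▸ List.getElem_mem hj'
    | succ i' =>
      have hi' : i' < sl.length := by simpa using hi
      cases j with
      | zero =>
        simp only [List.get_eq_getElem, List.getElem_cons_zero, List.getElem_cons_succ]
        constructor
        · intro hc
          simp only [Option.map_eq_some_iff] at hc
          obtain ⟨a, _, ha⟩ := hc
          omega
        · rintro ⟨hg, hc⟩
          exfalso
          apply hnm
          have : sl[i'] = (g, q) := Prod.ext hg (by omega)
          exact this ▸ List.getElem_mem hi'
      | succ j' =>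
        have hj' : j' < sl'.length := by simpa using hj
        have := h3 i' hi' j' hj'
        simp only [List.get_eq_getElem, List.getElem_cons_succ] at this ⊢
        rw [← this]
        constructor
        · intro hc
          simp only [Option.map_eq_some_iff] at hc
          obtain ⟨a, ha, hae⟩ := hc
          have : a = j' := by omega
          exact this ▸ ha
        · intro hc; rw [hc]; rfl
  · intro i hi hnone
    cases i with
    | zero => cases hnone
    | succ i' =>
      have hi' : i' < sl.length := by simpa using hi
      simp only [Option.map_eq_none_iff] at hnone
      have := h4 i' hi' hnone
      simp only [List.get_eq_getElem, List.getElem_cons_succ] at this ⊢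
      exact this
  · intro j hj hnr
    cases j with
    | zero => exact absurd rfl (hnr 0)
    | succ j' =>
      have hj' : j' < sl'.length := by simpa using hj
      have : ∀ i, γ i ≠ some j' := by
        intro i hc
        exact hnr (i + 1) (by simp [hc])
      have := h5 j' hj' this
      simp only [List.get_eq_getElem, List.getElem_cons_succ] at this ⊢
      exact this

lemma sim_applyRW (hsim : Equivalence sim) {u g : List α} {p : ℕ}
    (hlen : p + g.length ≤ u.length)
    (hseg : ∀ (k : ℕ) (a b : α), u[p + k]? = some a → g[k]? = some b → sim a b) :
    ∀ (n : ℕ) (a b : α), u[n]? = some a → (applyRW u (g, p))[n]? = some b → sim a b := by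
  intro n a b ha hb
  rcases lt_or_ge n p with hc | hc
  · rw [applyRW_getElem?_left hlen hc, ha] at hb
    exact (Option.some_inj.1 hb) ▸ hsim.refl a
  rcases lt_or_ge n (p + g.length) with hc2 | hc2
  · rw [applyRW_getElem?_mid hlen hc hc2] at hb
    have : p + (n - p) = n := by omega
    exact hseg (n - p) a b (by rw [this]; exact ha) hb
  · rw [applyRW_getElem?_right hlen hc2, ha] at hb
    exact (Option.some_inj.1 hb) ▸ hsim.refl a

lemma sliceSeq_transfer (hsim : Equivalence sim) {u v : List α}
    {σ : List (List (List α × ℕ))} (hlen : u.length = v.length)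
    (huv : ∀ (n : ℕ) (a b : α), u[n]? = some a → v[n]? = some b → sim a b)
    (h : IsSliceSeq sim G v σ) : IsSliceSeq sim G u σ := by
  obtain ⟨h1, h2, h3, h4, h5⟩ := h
  refine ⟨by omega, ?_, h3, h4, h5⟩
  intro n sl a hsl ha
  have hn : n < v.length := by
    have := (List.getElem?_eq_some_iff.1 ha).1; omega
  have hv : v[n]? = some (v[n]'hn) := List.getElem?_eq_some_iff.2 ⟨hn, rfl⟩
  have hslice := h2 n sl _ hsl hv
  have hab : sim a (v[n]'hn) := huv n a _ ha hv
  intro gq hgq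
  obtain ⟨hG, hq1, hq2, c, hc, hsimc⟩ := hslice gq hgq
  exact ⟨hG, hq1, hq2, c, hc, hsim.trans hab hsimc⟩

lemma seqYield_transfer (hsim : Equivalence sim) {u v : List α}
    {σ : List (List (List α × ℕ))} (hlen : u.length = v.length)
    (hσ : IsSliceSeq sim G v σ)
    (hnil : ∀ (n : ℕ) sl, σ[n]? = some sl → sl = [] → u[n]? = v[n]?) :
    seqYield u σ = seqYield v σ := by
  have hσl : σ.length = v.length := hσ.1
  apply List.ext_getElem
  · simp [seqYield]; omega
  · intro n h1 h2
    simp only [seqYield, List.length_map, List.length_zip] at h1 h2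
    have hnu : n < u.length := by omega
    have hnv : n < v.length := by omega
    have hnσ : n < σ.length := by omega
    simp only [seqYield, List.getElem_map, List.getElem_zip]
    by_cases he : σ[n] = []
    · rw [he]
      have := hnil n σ[n] (List.getElem?_eq_some_iff.2 ⟨hnσ, rfl⟩) he
      rw [List.getElem?_eq_some_iff.2 ⟨hnu, rfl⟩] at this
      have := (List.getElem?_eq_some_iff.1 this.symm).2
      simp only [sliceYield, List.getLast?_nil]
      exact this.symm
    · have hslice := hσ.2.1 n σ[n] (v[n]'hnv) (List.getElem?_eq_some_iff.2 ⟨hnσ, rfl⟩)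
        (List.getElem?_eq_some_iff.2 ⟨hnv, rfl⟩)
      exact sliceYield_eq_of_isSlice hslice he _

lemma rwSeq_tail (hsim : Equivalence sim) {u g : List α} {p : ℕ}
    {ρ : List (List α × ℕ)} (h : IsRewriteSeq sim G u ((g, p) :: ρ)) :
    IsRewriteSeq sim G (applyRW u (g, p)) ρ := by
  obtain ⟨hG, hlen, hf⟩ := h (g, p) (List.mem_cons_self)
  have hseg := seg_sim hlen hf
  have hsimuv := sim_applyRW hsim hlen hseg
  have hvlen : (applyRW u (g, p)).length = u.length := applyRW_length hlen
  intro gp hgp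
  obtain ⟨hG', hlen', hf'⟩ := h gp (List.mem_cons_of_mem _ hgp)
  refine ⟨hG', by omega, ?_⟩
  rw [List.forall₂_iff_get] at hf' ⊢
  have hl1 : (((applyRW u (g, p)).drop gp.2).take gp.1.length).length = gp.1.length := by
    simp only [List.length_take, List.length_drop]; omega
  have hl2 : ((u.drop gp.2).take gp.1.length).length = gp.1.length := by
    simp only [List.length_take, List.length_drop]; omega
  refine ⟨by rw [hl1], ?_⟩
  intro i h1 h2
  have hiu : gp.2 + i < u.length := by omega
  have hiv : gp.2 + i < (applyRW u (g, p)).length := by omega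
  have h1' : i < ((u.drop gp.2).take gp.1.length).length := by omega
  have := hf'.2 i h1' h2
  simp only [List.get_eq_getElem, List.getElem_take, List.getElem_drop] at this ⊢
  refine hsim.trans (hsim.symm ?_) this
  exact hsimuv (gp.2 + i) _ _ (List.getElem?_eq_some_iff.2 ⟨hiu, rfl⟩)
    (List.getElem?_eq_some_iff.2 ⟨hiv, rfl⟩)

lemma exists_sliceSeq (hsim : Equivalence sim) :
    ∀ (ρ : List (List α × ℕ)) (u : List α), IsRewriteSeq sim G u ρ →
      ∃ σ, IsSliceSeq sim G u σ ∧ (∀ sl ∈ σ, sl.Nodup) ∧ seqYield u σ = rwYield u ρ := by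
  intro ρ
  induction ρ with
  | nil =>
    intro u _
    exact ⟨List.replicate u.length [], (base_sliceSeq (sim := sim) (G := G) u).1,
      fun sl hsl => by rw [List.eq_of_mem_replicate hsl]; exact List.nodup_nil,
      (base_sliceSeq (sim := sim) (G := G) u).2⟩
  | cons gp ρ' ih =>
    obtain ⟨g, p⟩ := gp
    intro u hρ
    obtain ⟨hG0, hlen0, hf0⟩ := hρ (g, p) (List.mem_cons_self)
    have hG : g ∈ G := hG0
    have hlen : p + g.length ≤ u.length := hlen0
    have hf : List.Forall₂ sim ((u.drop p).take g.length) g := hf0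
    have hseg := seg_sim hlen hf
    have huv := sim_applyRW hsim hlen hseg
    have hvlen : (applyRW u (g, p)).length = u.length := applyRW_length hlen
    set v := applyRW u (g, p) with hv
    have hρ' := rwSeq_tail hsim hρ
    obtain ⟨σ', hσ', hnd', hy'⟩ := ih v hρ'
    have hrw : rwYield u ((g, p) :: ρ') = rwYield v ρ' := rfl
    have hσL : σ'.length = u.length := by rw [hσ'.1, hvlen]
    by_cases hg0 : g.length = 0
    · have hgnil : g = [] := List.eq_nil_of_length_eq_zero hg0
      have hveq : v = u := by rw [hv, hgnil, applyRW]; simp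
      refine ⟨σ', ?_, hnd', ?_⟩
      · rw [← hveq]; exact hσ'
      · rw [hrw, ← hveq]; exact hy'
    have hg1 : 1 ≤ g.length := by omega
    by_cases hdup : ∃ sl0, σ'[p]? = some sl0 ∧ (g, 1) ∈ sl0
    · -- the guide is already recorded along the whole block: keep σ'
      have hd : ∀ sl0, σ'[p]? = some sl0 → (g, 1) ∈ sl0 := by
        intro sl0 h0
        obtain ⟨sl1, h1, hm⟩ := hdup
        rw [h0] at h1
        exact (Option.some_inj.1 h1) ▸ hm
      have hup := chain_up hσ' (by omega : p + g.length ≤ v.length) hd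
      refine ⟨σ', sliceSeq_transfer hsim (by omega) huv hσ', hnd', ?_⟩
      rw [hrw, ← hy']
      refine seqYield_transfer hsim (by omega) hσ' ?_
      intro n sl hsl hnil
      have hn : n < u.length := by
        have := (List.getElem?_eq_some_iff.1 hsl).1; omega
      rcases lt_or_ge n p with hc | hc
      · exact (applyRW_getElem?_left hlen hc).symm
      rcases lt_or_ge n (p + g.length) with hc2 | hc2
      · exfalso
        have heq : p + (n - p) = n := by omega
        have := hup (n - p) (by omega) sl (by rw [heq]; exact hsl)
        rw [hnil] at this
        cases this
      · exact (applyRW_getElem?_right hlen hc2).symm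
    · -- genuinely new: insert the pair `(g, n - p + 1)` in front of each block slice
      have hblock : ∀ n, p ≤ n → n < p + g.length → (g, n - p + 1) ∉ σ'.getD n [] := by
        intro n h1 h2 hm
        have hnL : n < u.length := by omega
        have hsl'n : σ'[n]? = some (σ'.getD n []) := by
          rw [List.getD_eq_getElem _ _ (by omega)]
          exact List.getElem?_eq_some_iff.2 ⟨by omega, rfl⟩
        have hsl'p : σ'[p]? = some (σ'.getD p []) := by
          rw [List.getD_eq_getElem _ _ (by omega)]
          exact List.getElem?_eq_some_iff.2 ⟨by omega, rfl⟩
        have heq : p + (n - p) = n := by omega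
        exact hdup ⟨σ'.getD p [], hsl'p,
          chain_down hσ' (n - p) (σ'.getD n []) (by rw [heq]; exact hsl'n) hm _ hsl'p⟩
      have hsl'? : ∀ (n : ℕ), n < u.length → σ'[n]? = some (σ'.getD n []) := by
        intro n hn
        rw [List.getD_eq_getElem _ _ (by omega)]
        exact List.getElem?_eq_some_iff.2 ⟨by omega, rfl⟩
      set F : ℕ → List (List α × ℕ) := fun n =>
        if p ≤ n ∧ n < p + g.length then (g, n - p + 1) :: σ'.getD n [] else σ'.getD n []
        with hF
      set σ : List (List (List α × ℕ)) := List.ofFn (fun i : Fin u.length => F i) with hσdef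
      have hσlen : σ.length = u.length := by simp [hσdef]
      have hσ? : ∀ (n : ℕ), n < u.length → σ[n]? = some (F n) := by
        intro n hn
        rw [hσdef, List.getElem?_ofFn]
        simp [List.ofFnNthVal, hn]
      have hslice' : ∀ (n : ℕ) (hn : n < u.length), IsSlice sim G (σ'.getD n []) (v[n]'(by omega)) :=
        fun n hn => hσ'.2.1 n _ _ (hsl'? n hn) (List.getElem?_eq_some_iff.2 ⟨by omega, rfl⟩)
      refine ⟨σ, ⟨hσlen, ?_, ?_, ?_, ?_⟩, ?_, ?_⟩
      · -- slices
        intro n sl a hsl ha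
        have hn : n < u.length := (List.getElem?_eq_some_iff.1 ha).1
        have hsleq : sl = F n := by
          rw [hσ? n hn] at hsl
          exact (Option.some_inj.1 hsl).symm
        have hvn : n < v.length := by omega
        have hbase := hslice' n hn
        have hav : sim a (v[n]'hvn) :=
          huv n a _ ha (List.getElem?_eq_some_iff.2 ⟨hvn, rfl⟩)
        subst hsleq
        by_cases hB : p ≤ n ∧ n < p + g.length
        · rw [hF]
          simp only [if_pos hB]
          intro gq hgq
          rcases List.mem_cons.1 hgq with rfl | hgq'
          · refine ⟨hG, by omega, by simp; omega, ?_⟩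
            have hnp : n - p < g.length := by omega
            refine ⟨g[n - p], ?_, ?_⟩
            · have e : n - p + 1 - 1 = n - p := by omega
              show g[n - p + 1 - 1]? = _
              rw [e]
              exact List.getElem?_eq_some_iff.2 ⟨hnp, rfl⟩
            · exact hseg (n - p) a _ (by rw [show p + (n - p) = n by omega]; exact ha)
                (List.getElem?_eq_some_iff.2 ⟨hnp, rfl⟩)
          · obtain ⟨m1, m2, m3, c, hc, hsimc⟩ := hbase gq hgq'
            exact ⟨m1, m2, m3, c, hc, hsim.trans hav hsimc⟩
        · rw [hF]
          simp only [if_neg hB]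
          intro gq hgq
          obtain ⟨m1, m2, m3, c, hc, hsimc⟩ := hbase gq hgq
          exact ⟨m1, m2, m3, c, hc, hsim.trans hav hsimc⟩
      · -- cuts
        intro n sl sl2 hsl hsl2
        have hn1 : n + 1 < u.length := by
          have := (List.getElem?_eq_some_iff.1 hsl2).1
          omega
        have hn : n < u.length := by omega
        have hsleq : sl = F n := by
          rw [hσ? n hn] at hsl; exact (Option.some_inj.1 hsl).symm
        have hsl2eq : sl2 = F (n + 1) := by
          rw [hσ? (n + 1) hn1] at hsl2; exact (Option.some_inj.1 hsl2).symm
        obtain ⟨γ', hγ'⟩ := hσ'.2.2.1 n _ _ (hsl'? n hn) (hsl'? (n + 1) hn1)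
        have hq1 : ∀ gq ∈ σ'.getD n [], 1 ≤ gq.2 := fun gq hgq => ((hslice' n hn) gq hgq).2.1
        have hq2 : ∀ gq ∈ σ'.getD (n + 1) [], gq.2 ≤ gq.1.length :=
          fun gq hgq => ((hslice' (n + 1) hn1) gq hgq).2.2.1
        subst hsleq hsl2eq
        by_cases hBn : p ≤ n ∧ n < p + g.length <;>
          by_cases hBn1 : p ≤ n + 1 ∧ n + 1 < p + g.length
        · -- both in block
          rw [hF]
          simp only [if_pos hBn, if_pos hBn1]
          have e : n + 1 - p + 1 = (n - p + 1) + 1 := by omega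
          rw [e]
          refine ⟨_, cut_both hγ' g (n - p + 1) (hblock n hBn.1 hBn.2) ?_⟩
          have := hblock (n + 1) hBn1.1 hBn1.2
          rwa [e] at this
        · -- block ends at n
          rw [hF]
          simp only [if_pos hBn, if_neg hBn1]
          have e : n - p + 1 = g.length := by omega
          rw [e]
          exact ⟨_, cut_shift_left hγ' g hq2⟩
        · -- block starts at n + 1
          rw [hF]
          simp only [if_neg hBn, if_pos hBn1]
          have e : n + 1 - p + 1 = 1 := by omega
          rw [e]
          exact ⟨_, cut_shift_right hγ' g hq1⟩
        · -- outside the block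
          rw [hF]
          simp only [if_neg hBn, if_neg hBn1]
          exact ⟨γ', hγ'⟩
      · -- start slice
        intro sl hsl
        have h0 : (0 : ℕ) < u.length := by omega
        have hsleq : sl = F 0 := by
          rw [hσ? 0 h0] at hsl; exact (Option.some_inj.1 hsl).symm
        have hstart' := hσ'.2.2.2.1 (σ'.getD 0 []) (hsl'? 0 h0)
        subst hsleq
        by_cases hB : p ≤ 0 ∧ 0 < p + g.length
        · rw [hF]
          simp only [if_pos hB]
          intro gq hgq
          rcases List.mem_cons.1 hgq with rfl | hgq'
          · simp
          · exact hstart' gq hgq'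
        · rw [hF]; simp only [if_neg hB]; exact hstart'
      · -- end slice
        intro sl hsl
        rw [hσlen] at hsl
        have hL1 : u.length - 1 < u.length := by omega
        have hsleq : sl = F (u.length - 1) := by
          rw [hσ? (u.length - 1) hL1] at hsl; exact (Option.some_inj.1 hsl).symm
        have hend' : IsEndSlice (σ'.getD (u.length - 1) []) := by
          refine hσ'.2.2.2.2 _ ?_
          rw [hσ'.1, hvlen]
          exact hsl'? (u.length - 1) hL1
        subst hsleq
        by_cases hB : p ≤ u.length - 1 ∧ u.length - 1 < p + g.length
        · rw [hF]
          simp only [if_pos hB]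
          have e : u.length - 1 - p + 1 = g.length := by omega
          rw [e]
          intro gq hgq
          rcases List.mem_cons.1 hgq with rfl | hgq'
          · rfl
          · exact hend' gq hgq'
        · rw [hF]; simp only [if_neg hB]; exact hend'
      · -- repetition-free
        intro sl hsl
        rw [hσdef, List.mem_ofFn] at hsl
        obtain ⟨i, rfl⟩ := hsl
        have hmem : σ'.getD (i : ℕ) [] ∈ σ' := by
          rw [List.getD_eq_getElem _ _ (by omega : (i : ℕ) < σ'.length)]
          exact List.getElem_mem _
        by_cases hB : p ≤ (i : ℕ) ∧ (i : ℕ) < p + g.length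
        · rw [hF]
          simp only [if_pos hB]
          exact List.nodup_cons.2 ⟨hblock i hB.1 hB.2, hnd' _ hmem⟩
        · rw [hF]; simp only [if_neg hB]; exact hnd' _ hmem
      · -- yield
        rw [hrw, ← hy']
        apply List.ext_getElem
        · simp only [seqYield, List.length_map, List.length_zip, hσlen, hσL, hvlen]
        · intro n h1 h2
          simp only [seqYield, List.length_map, List.length_zip] at h1 h2
          have hn : n < u.length := by omega
          have hvn : n < v.length := by omega
          have hσ'n : n < σ'.length := by omega
          simp only [seqYield, List.getElem_map, List.getElem_zip]
          have hσn : σ[n]'(by omega) = F n := by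
            have := hσ? n hn
            rw [List.getElem?_eq_some_iff] at this
            exact this.2
          have hσ'ng : σ'[n]'hσ'n = σ'.getD n [] := (List.getD_eq_getElem _ _ hσ'n).symm
          rw [hσn, hσ'ng]
          by_cases hB : p ≤ n ∧ n < p + g.length
          · rw [hF]
            simp only [if_pos hB]
            have hnp : n - p < g.length := by omega
            have hvng : v[n]'hvn = g[n - p] := by
              have := applyRW_getElem?_mid hlen hB.1 hB.2
              rw [List.getElem?_eq_some_iff.2 ⟨hvn, rfl⟩, List.getElem?_eq_some_iff.2 ⟨hnp, rfl⟩] at this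
              exact Option.some_inj.1 this
            by_cases hnil : σ'.getD n [] = []
            · rw [hnil]
              rw [sliceYield_singleton]
              have e : n - p + 1 - 1 = n - p := by omega
              show (g[n - p + 1 - 1]?).getD _ = _
              rw [e, List.getElem?_eq_some_iff.2 ⟨hnp, rfl⟩]
              simp [sliceYield, hvng]
            · rw [sliceYield_cons_ne_nil _ _ hnil]
              exact sliceYield_eq_of_isSlice (hslice' n hn) hnil _
          · rw [hF]
            simp only [if_neg hB]
            by_cases hnil : σ'.getD n [] = []
            · rw [hnil]
              simp only [sliceYield, List.getLast?_nil]
              have : v[n]? = u[n]? := by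
                rcases lt_or_ge n p with hc | hc
                · exact applyRW_getElem?_left hlen hc
                · exact applyRW_getElem?_right hlen (by omega)
              rw [List.getElem?_eq_some_iff.2 ⟨hvn, rfl⟩, List.getElem?_eq_some_iff.2 ⟨hn, rfl⟩] at this
              exact (Option.some_inj.1 this).symm
            · exact sliceYield_eq_of_isSlice (hslice' n hn) hnil _

end Aux

/-- The set `Z` of all repetition-free slices for symbols of
`Σ` and guides from the finite set `G` is finite; moreover every guided rewrite
sequence `ρ` for a string `u` admits a slice sequence `σ` for `u` consisting of
slices from `Z` only, with `yield(σ) = yield(ρ)`. -/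
theorem finitely_many_repetitionFree_slices
    {α : Type} [Fintype α] (sim : α → α → Prop) (hsim : Equivalence sim)
    (G : Set (List α)) (hG : G.Finite) :
    Set.Finite {sl : List (List α × ℕ) |
        RepetitionFree sl ∧ ∃ a : α, IsSlice sim G sl a} ∧
    ∀ (u : List α) (ρ : List (List α × ℕ)), IsRewriteSeq sim G u ρ →
      ∃ σ : List (List (List α × ℕ)), IsSliceSeq sim G u σ ∧
        (∀ sl ∈ σ, RepetitionFree sl ∧ ∃ a : α, IsSlice sim G sl a) ∧
        seqYield u σ = rwYield u ρ := by
  constructor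
  · apply Set.Finite.subset (nodup_lists_finite (slice_pairs_finite (sim := sim) hG))
    rintro sl ⟨hnd, a, hsl⟩
    exact ⟨hnd, fun gq hgq => ⟨(hsl gq hgq).1, (hsl gq hgq).2.1, (hsl gq hgq).2.2.1⟩⟩
  · intro u ρ hρ
    obtain ⟨σ, hσ, hnd, hy⟩ := exists_sliceSeq hsim ρ u hρ
    refine ⟨σ, hσ, ?_, hy⟩
    intro sl hsl
    obtain ⟨n, hn, hget⟩ := List.mem_iff_getElem.1 hsl
    have hnu : n < u.length := by rw [← hσ.1]; exact hn
    exact ⟨hnd sl hsl, u[n], hσ.2.1 n sl u[n]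
      (by rw [← hget]; exact List.getElem?_eq_some_iff.2 ⟨hn, rfl⟩)
      (List.getElem?_eq_some_iff.2 ⟨hnu, rfl⟩)⟩
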